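/- arXiv:1412.5563 — 11 statements merged into one kernel-verified Lean document; each statement's English description precedes it below -/
import Mathlib

section
/- If α : ℕ → ℕ is a I-modulus of total boundedness for a nonempty subset A of a metric space X (i.e., for every k there exist points a₀,…,a_{α(k)} ∈ X such that every x ∈ A is within distance 1/(k+1) of some aᵢ), then γ(k) := α(2k+1)+1 is a II-modulus of total boundedness for A (i.e., for every k and every sequence (xₙ) in A there exist 0 ≤ i < j ≤ γ(k) with d(xᵢ,xⱼ) ≤ 1/(k+1)). -/
theorem stmt0 {X : Type*} [MetricSpace X] (A : Set X) (hA : A.Nonempty)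
    (α : ℕ → ℕ)
    (hα : ∀ k : ℕ, ∃ a : ℕ → X, ∀ x ∈ A, ∃ i ≤ α k, dist x (a i) ≤ 1 / (k + 1)) :
    ∀ k : ℕ, ∀ x : ℕ → X, (∀ n, x n ∈ A) →
      ∃ i j : ℕ, i < j ∧ j ≤ α (2 * k + 1) + 1 ∧ dist (x i) (x j) ≤ 1 / (k + 1) := by
  intro k x hx
  obtain ⟨a, ha⟩ := hα (2 * k + 1)
  set N := α (2 * k + 1)
  choose f hf hdist using fun n => ha (x n) (hx n)
  have hmaps : ∀ n ∈ Finset.range (N + 2), f n ∈ Finset.range (N + 1) := by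
    intro n _; exact Finset.mem_range.2 (Nat.lt_succ_of_le (hf n))
  obtain ⟨m, hm, n, hn, hmn, hfeq⟩ :=
    Finset.exists_ne_map_eq_of_card_lt_of_maps_to
      (by simp) hmaps
  rcases lt_or_gt_of_ne hmn with h | h
  · refine ⟨m, n, h, Nat.lt_succ_iff.1 (Finset.mem_range.1 hn), ?_⟩
    calc dist (x m) (x n) ≤ dist (x m) (a (f m)) + dist (x n) (a (f n)) := by
          rw [hfeq]; exact dist_triangle_right _ _ _
      _ ≤ 1 / ((2 * k + 1 : ℕ) + 1) + 1 / ((2 * k + 1 : ℕ) + 1) := add_le_add (hdist m) (hdist n)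
      _ ≤ 1 / (k + 1) := by
          rw [← add_div]
          rw [div_le_div_iff₀ (by positivity) (by positivity)]
          push_cast; ring_nf; linarith
  · refine ⟨n, m, h, Nat.lt_succ_iff.1 (Finset.mem_range.1 hm), ?_⟩
    calc dist (x n) (x m) ≤ dist (x n) (a (f n)) + dist (x m) (a (f m)) := by
          rw [hfeq]; exact dist_triangle_right _ _ _
      _ ≤ 1 / ((2 * k + 1 : ℕ) + 1) + 1 / ((2 * k + 1 : ℕ) + 1) := add_le_add (hdist n) (hdist m)
      _ ≤ 1 / (k + 1) := by
          rw [← add_div]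
          rw [div_le_div_iff₀ (by positivity) (by positivity)]
          push_cast; ring_nf; linarith
end

section
/- If γ : ℕ → ℕ is a II-modulus of total boundedness for a nonempty subset A of a metric space X, then α(k) := γ(k) − 1 is a I-modulus of total boundedness for A; in particular, A is totally bounded. -/
theorem stmt1 {X : Type*} [MetricSpace X] (A : Set X) (hA : A.Nonempty)
    (γ : ℕ → ℕ)
    (hγ : ∀ k : ℕ, ∀ x : ℕ → X, (∀ n, x n ∈ A) →
      ∃ i j : ℕ, i < j ∧ j ≤ γ k ∧ dist (x i) (x j) ≤ 1 / (k + 1)) :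
    (∀ k : ℕ, ∃ a : ℕ → X, ∀ x ∈ A, ∃ i ≤ γ k - 1, dist x (a i) ≤ 1 / (k + 1)) ∧
      TotallyBounded A := by
  have key : ∀ k : ℕ, ∃ a : ℕ → X, ∀ x ∈ A, ∃ i ≤ γ k - 1,
      dist x (a i) ≤ 1 / (k + 1) := by
    intro k
    by_contra hcon
    push_neg at hcon
    -- hcon : ∀ a, ∃ x ∈ A, ∀ i ≤ γ k - 1, 1/(k+1) < dist x (a i)
    classical
    choose f hfA hfd using hcon
    -- build approximations
    let u : ℕ → (ℕ → X) := fun n =>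
      Nat.rec (fun _ => hA.choose) (fun n prev => fun i => if i = n then f prev else prev i) n
    have hu_succ : ∀ n i, u (n + 1) i = if i = n then f (u n) else u n i := fun n i => rfl
    set x : ℕ → X := fun n => f (u n) with hx
    have hagree : ∀ n i, i < n → u n i = x i := by
      intro n
      induction n with
      | zero => intro i hi; omega
      | succ n ih =>
        intro i hi
        rw [hu_succ]
        rcases Nat.lt_succ_iff_lt_or_eq.mp hi with h | h
        · rw [if_neg (by omega), ih i h]
        · rw [if_pos h, h]
    have hxA : ∀ n, x n ∈ A := fun n => hfA (u n)
    obtain ⟨i, j, hij, hjle, hd⟩ := hγ k x hxA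
    have hile : i ≤ γ k - 1 := by omega
    have := hfd (u j) i hile
    rw [hagree j i hij] at this
    rw [dist_comm] at hd
    exact absurd hd (not_le.mpr this)
  refine ⟨key, ?_⟩
  rw [Metric.totallyBounded_iff]
  intro ε hε
  obtain ⟨k, hk⟩ := exists_nat_one_div_lt hε
  obtain ⟨a, ha⟩ := key k
  refine ⟨a '' Set.Iic (γ k - 1), (Set.finite_Iic _).image a, ?_⟩
  intro z hz
  obtain ⟨i, hile, hdi⟩ := ha z hz
  refine Set.mem_biUnion ⟨i, hile, rfl⟩ ?_
  exact Metric.mem_ball.mpr (lt_of_le_of_lt (by exact_mod_cast hdi) hk)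
end

section
/- Let X be a metric space with II-modulus of total boundedness γ (so every sequence of γ(0)+1 points contains two at distance ≤ 1). For sequences (xₙ),(yₙ) in X define recursively n₀ := 0 and n_{k+1} := ⌈max over i,j ≤ k of { n_k, d(x_{nᵢ},y_{nⱼ}), d(x_{nᵢ},x_{nⱼ}), d(y_{nᵢ},y_{nⱼ}) } + 3⌉. Then there exists N ≤ n_{γ(0)} with d(x_N, y_N) < N. -/
theorem stmt5 {X : Type*} [MetricSpace X] (γ : ℕ → ℕ)
    (hγ : ∀ k : ℕ, ∀ z : ℕ → X, ∃ i j : ℕ, i < j ∧ j ≤ γ k ∧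
      dist (z i) (z j) ≤ 1 / (k + 1))
    (x y : ℕ → X) (n : ℕ → ℕ) (hn0 : n 0 = 0)
    (hn : ∀ k : ℕ, n (k + 1) =
      ⌈((Finset.range (k + 1) ×ˢ Finset.range (k + 1)).sup'
          (Finset.Nonempty.product (Finset.nonempty_range_iff.mpr (Nat.succ_ne_zero k))
            (Finset.nonempty_range_iff.mpr (Nat.succ_ne_zero k)))
          (fun ij => max ((n k : ℝ))
            (max (dist (x (n ij.1)) (y (n ij.2)))
              (max (dist (x (n ij.1)) (x (n ij.2))) (dist (y (n ij.1)) (y (n ij.2))))))) + 3⌉₊) :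
    ∃ N ≤ n (γ 0), dist (x N) (y N) < N := by
  classical
  by_contra hcon
  push_neg at hcon
  -- hcon : ∀ N ≤ n (γ 0), ↑N ≤ dist (x N) (y N)
  have hsup : ∀ k a b : ℕ, a ≤ k → b ≤ k →
      dist (x (n a)) (y (n b)) + 3 ≤ (n (k+1) : ℝ) ∧
      dist (x (n a)) (x (n b)) + 3 ≤ (n (k+1) : ℝ) ∧
      dist (y (n a)) (y (n b)) + 3 ≤ (n (k+1) : ℝ) ∧
      (n k : ℝ) + 3 ≤ (n (k+1) : ℝ) := by
    intro k a b ha hb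
    have hne := (Finset.Nonempty.product (Finset.nonempty_range_iff.mpr (Nat.succ_ne_zero k))
            (Finset.nonempty_range_iff.mpr (Nat.succ_ne_zero k)))
    set S : ℝ := ((Finset.range (k + 1) ×ˢ Finset.range (k + 1)).sup' hne
          (fun ij => max ((n k : ℝ))
            (max (dist (x (n ij.1)) (y (n ij.2)))
              (max (dist (x (n ij.1)) (x (n ij.2))) (dist (y (n ij.1)) (y (n ij.2))))))) with hS
    have hceil : S + 3 ≤ (n (k+1) : ℝ) := by
      rw [hn k]; exact Nat.le_ceil _
    have hmem : (a, b) ∈ (Finset.range (k + 1) ×ˢ Finset.range (k + 1)) := by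
      simp [Finset.mem_product, Nat.lt_succ_iff, ha, hb]
    have hle := Finset.le_sup' (f := (fun ij => max ((n k : ℝ))
            (max (dist (x (n ij.1)) (y (n ij.2)))
              (max (dist (x (n ij.1)) (x (n ij.2))) (dist (y (n ij.1)) (y (n ij.2))))))) hmem
    rw [← hS] at hle
    simp only at hle
    have h0 : (n k : ℝ) ≤ S := le_trans (le_max_left _ _) hle
    have h1 : dist (x (n a)) (y (n b)) ≤ S :=
      le_trans (le_trans (le_max_left _ _) (le_max_right _ _)) hle
    have h2 : dist (x (n a)) (x (n b)) ≤ S :=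
      le_trans (le_trans (le_trans (le_max_left _ _) (le_max_right _ _)) (le_max_right _ _)) hle
    have h3 : dist (y (n a)) (y (n b)) ≤ S :=
      le_trans (le_trans (le_trans (le_max_right _ _) (le_max_right _ _)) (le_max_right _ _)) hle
    exact ⟨by linarith, by linarith, by linarith, by linarith⟩
  have hmono : Monotone n := by
    apply monotone_nat_of_le_succ
    intro k
    have := (hsup k 0 0 (Nat.zero_le _) (Nat.zero_le _)).2.2.2
    exact_mod_cast le_trans (by linarith : (n k : ℝ) ≤ (n k : ℝ) + 3) this
  -- the key dichotomy
  have key : ∀ j, 1 ≤ j → j ≤ γ 0 →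
      (∀ a < j, 3/2 ≤ dist (x (n j)) (x (n a)) ∧ 3/2 ≤ dist (x (n j)) (y (n a))) ∨
      (∀ a < j, 3/2 ≤ dist (y (n j)) (x (n a)) ∧ 3/2 ≤ dist (y (n j)) (y (n a))) := by
    intro j hj1 hjγ
    obtain ⟨k, rfl⟩ : ∃ k, j = k + 1 := ⟨j - 1, by omega⟩
    by_contra hne
    push_neg at hne
    obtain ⟨⟨a, ha, hax⟩, ⟨b, hb, hby⟩⟩ := hne
    have ha' : a ≤ k := by omega
    have hb' : b ≤ k := by omega
    -- pick u close to x (n (k+1))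
    obtain ⟨u, hu, huv⟩ : ∃ u, dist (x (n (k+1))) u < 3/2 ∧
        (dist u (x (n b)) + 3 ≤ (n (k+1) : ℝ) ∧ dist u (y (n b)) + 3 ≤ (n (k+1) : ℝ)) := by
      rcases lt_or_ge (dist (x (n (k+1))) (x (n a))) (3/2) with h' | h'
      · exact ⟨x (n a), h', (hsup k a b ha' hb').2.1, (hsup k a b ha' hb').1⟩
      · refine ⟨y (n a), hax h', ?_, (hsup k a b ha' hb').2.2.1⟩
        have := (hsup k b a hb' ha').1
        rw [dist_comm]
        linarith
    obtain ⟨v, hv, hv'⟩ : ∃ v, dist (y (n (k+1))) v < 3/2 ∧ dist u v + 3 ≤ (n (k+1) : ℝ) := by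
      rcases lt_or_ge (dist (y (n (k+1))) (x (n b))) (3/2) with h' | h'
      · exact ⟨x (n b), h', huv.1⟩
      · exact ⟨y (n b), hby h', huv.2⟩
    have hN : ((n (k+1) : ℕ) : ℝ) ≤ dist (x (n (k+1))) (y (n (k+1))) :=
      hcon _ (hmono hjγ)
    have tri : dist (x (n (k+1))) (y (n (k+1))) ≤
        dist (x (n (k+1))) u + dist u v + dist v (y (n (k+1))) := dist_triangle4 _ _ _ _
    rw [dist_comm v] at tri
    linarith
  -- build the separated sequence
  set P : ℕ → Prop := fun j => ∀ a < j, 3/2 ≤ dist (x (n j)) (x (n a)) ∧ 3/2 ≤ dist (x (n j)) (y (n a))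
    with hP
  set z : ℕ → X := fun j => if P j then x (n j) else y (n j) with hz
  obtain ⟨i, j, hij, hjγ, hd⟩ := hγ 0 z
  have hj1 : 1 ≤ j := by omega
  have hgood : ∀ a < j, 3/2 ≤ dist (z j) (x (n a)) ∧ 3/2 ≤ dist (z j) (y (n a)) := by
    by_cases h : P j
    · simpa [hz, if_pos h] using h
    · have := (key j hj1 hjγ).resolve_left h
      simpa [hz, if_neg h] using this
  have hzi : z i = x (n i) ∨ z i = y (n i) := by
    by_cases h : P i
    · exact Or.inl (by simp [hz, if_pos h])
    · exact Or.inr (by simp [hz, if_neg h])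
  have hsep : (3/2 : ℝ) ≤ dist (z i) (z j) := by
    rw [dist_comm]
    rcases hzi with h | h <;> rw [h]
    · exact (hgood i hij).1
    · exact (hgood i hij).2
  have : dist (z i) (z j) ≤ 1 := by
    have := hd; norm_num at this; linarith
  linarith
end

section
/- Let (xₙ) be (G,H)-Fejér monotone with respect to a nonempty set F ⊆ X, where G has a G-modulus α_G and H has an H-modulus β_H. If the set {xₙ : n ∈ ℕ} has an adherent point x̂ ∈ F, then (xₙ) converges to x̂. -/
theorem stmt8 {X : Type*} [MetricSpace X] (F : Set X) (hF : F.Nonempty)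
    (G H : NNReal → NNReal) (αG βH : ℕ → ℕ)
    (hαG : ∀ k : ℕ, ∀ a : NNReal, a ≤ ((αG k : NNReal) + 1)⁻¹ → G a ≤ ((k : NNReal) + 1)⁻¹)
    (hβH : ∀ k : ℕ, ∀ a : NNReal, H a ≤ ((βH k : NNReal) + 1)⁻¹ → a ≤ ((k : NNReal) + 1)⁻¹)
    (x : ℕ → X)
    (hfejer : ∀ n m : ℕ, ∀ p ∈ F, H (nndist (x (n + m)) p) ≤ G (nndist (x n) p))
    (x' : X) (hx'F : x' ∈ F) (hadh : x' ∈ closure (Set.range x)) :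
    Filter.Tendsto x Filter.atTop (nhds x') := by
  rw [Metric.tendsto_atTop]
  intro ε hε
  obtain ⟨k, hk⟩ := exists_nat_gt ε⁻¹
  have hkε : ((k : ℝ) + 1)⁻¹ < ε := by
    have h0 : ε⁻¹ < (k : ℝ) + 1 := lt_trans hk (by linarith)
    have := (inv_lt_iff_one_lt_mul₀ (by positivity)).mp h0
    rw [inv_lt_iff_one_lt_mul₀ (by positivity)]
    nlinarith [inv_pos.mpr hε]
  set j := αG (βH k) with hj
  have hδ : (0 : ℝ) < ((j : ℝ) + 1)⁻¹ := by positivity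
  obtain ⟨y, ⟨n, rfl⟩, hy⟩ := Metric.mem_closure_iff.mp hadh _ hδ
  have hn : nndist (x n) x' ≤ ((j : NNReal) + 1)⁻¹ := by
    rw [← NNReal.coe_le_coe]
    push_cast
    rw [dist_comm] at hy
    exact hy.le
  refine ⟨n, fun N hN => ?_⟩
  obtain ⟨m, rfl⟩ := Nat.exists_eq_add_of_le hN
  have h1 : G (nndist (x n) x') ≤ ((βH k : NNReal) + 1)⁻¹ := hαG _ _ hn
  have h2 : H (nndist (x (n + m)) x') ≤ ((βH k : NNReal) + 1)⁻¹ :=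
    le_trans (hfejer n m x' hx'F) h1
  have h3 : nndist (x (n + m)) x' ≤ ((k : NNReal) + 1)⁻¹ := hβH _ _ h2
  have h4 : dist (x (n + m)) x' ≤ ((k : ℝ) + 1)⁻¹ := by
    rw [dist_nndist]
    rw [← NNReal.coe_le_coe] at h3
    push_cast at h3
    exact h3
  linarith
end

section
/- Let X be a compact metric space, F = ⋂ₖ AF_k nonempty and explicitly closed, and (xₙ) a sequence that is (G,H)-Fejér monotone with respect to F (where G has a G-modulus and H has an H-modulus) and has approximate F-points. Then (xₙ) converges to a point x ∈ F. -/
theorem stmt9 {X : Type*} [MetricSpace X] [CompactSpace X]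
    (AF : ℕ → Set X) (hmono : Antitone AF) (hne : (⋂ k, AF k).Nonempty)
    (hclosed : ∀ p : X,
      (∀ N M : ℕ, (AF M ∩ Metric.closedBall p (1 / (N + 1))).Nonempty) → p ∈ ⋂ k, AF k)
    (G H : NNReal → NNReal) (αG βH : ℕ → ℕ)
    (hαG : ∀ k : ℕ, ∀ a : NNReal, a ≤ ((αG k : NNReal) + 1)⁻¹ → G a ≤ ((k : NNReal) + 1)⁻¹)
    (hβH : ∀ k : ℕ, ∀ a : NNReal, H a ≤ ((βH k : NNReal) + 1)⁻¹ → a ≤ ((k : NNReal) + 1)⁻¹)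
    (x : ℕ → X)
    (hfejer : ∀ n m : ℕ, ∀ p ∈ ⋂ k, AF k, H (nndist (x (n + m)) p) ≤ G (nndist (x n) p))
    (happrox : ∀ k : ℕ, ∃ n : ℕ, x n ∈ AF k) :
    ∃ p ∈ ⋂ k, AF k, Filter.Tendsto x Filter.atTop (nhds p) := by
  classical
  choose n hn using happrox
  obtain ⟨p, -, φ, hφ, hconv⟩ :=
    isCompact_univ.tendsto_subseq (x := fun k => x (n k)) (fun k => Set.mem_univ _)
  have hpF : p ∈ ⋂ k, AF k := by
    apply hclosed
    intro N M
    have hpos : (0 : ℝ) < 1 / (N + 1) := by positivity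
    obtain ⟨K, hK⟩ := Metric.tendsto_atTop.mp hconv (1 / (N + 1)) hpos
    refine ⟨x (n (φ (max K M))), ?_, ?_⟩
    · exact hmono (le_trans (le_max_right K M) hφ.le_apply) (hn _)
    · exact Metric.mem_closedBall.mpr (hK _ (le_max_left K M)).le
  refine ⟨p, hpF, ?_⟩
  rw [Metric.tendsto_atTop]
  intro ε hε
  obtain ⟨k, hk⟩ := exists_nat_one_div_lt hε
  set i := αG (βH k) with hi
  have hpos : (0 : ℝ) < ((i : ℝ) + 1)⁻¹ := by positivity
  obtain ⟨K, hK⟩ := Metric.tendsto_atTop.mp hconv _ hpos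
  set n0 := n (φ K) with hn0
  have hsmall : nndist (x n0) p ≤ ((i : NNReal) + 1)⁻¹ := by
    have h := (hK K le_rfl).le
    rw [← NNReal.coe_le_coe, NNReal.coe_inv, NNReal.coe_add, NNReal.coe_natCast,
      NNReal.coe_one, ← dist_nndist]
    exact h
  refine ⟨n0, fun m hm => ?_⟩
  obtain ⟨d, rfl⟩ := Nat.exists_eq_add_of_le hm
  have h1 : H (nndist (x (n0 + d)) p) ≤ G (nndist (x n0) p) := hfejer n0 d p hpF
  have h2 : G (nndist (x n0) p) ≤ ((βH k : NNReal) + 1)⁻¹ := hαG _ _ hsmall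
  have h3 : nndist (x (n0 + d)) p ≤ ((k : NNReal) + 1)⁻¹ := hβH k _ (h1.trans h2)
  have h4 : dist (x (n0 + d)) p ≤ ((k : ℝ) + 1)⁻¹ := by
    rw [dist_nndist]
    exact_mod_cast h3
  calc dist (x (n0 + d)) p ≤ ((k : ℝ) + 1)⁻¹ := h4
    _ < ε := by rw [one_div] at hk; exact hk
end

section
/- Let X be a totally bounded metric space and let (xₙ) be a sequence that is uniformly (G,H)-Fejér monotone with respect to F = ⋂ₖ AF_k and has approximate F-points, where G has a G-modulus and H has an H-modulus. Then (xₙ) is a Cauchy sequence. -/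
private lemma stmt10_aux (b : NNReal) :
    (2 * b + 1 + 1)⁻¹ + (2 * b + 1 + 1)⁻¹ ≤ (b + 1)⁻¹ := by
  have h : 2 * b + 1 + 1 = 2 * (b + 1) := by ring
  rw [← two_mul, h, mul_inv, ← mul_assoc, mul_inv_cancel₀ two_ne_zero, one_mul]

theorem stmt10 {X : Type*} [MetricSpace X]
    (htb : TotallyBounded (Set.univ : Set X))
    (AF : ℕ → Set X) (hmono : Antitone AF) (hne : (⋂ k, AF k).Nonempty)
    (G H : NNReal → NNReal) (αG βH : ℕ → ℕ)
    (hαG : ∀ k : ℕ, ∀ a : NNReal, a ≤ ((αG k : NNReal) + 1)⁻¹ → G a ≤ ((k : NNReal) + 1)⁻¹)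
    (hβH : ∀ k : ℕ, ∀ a : NNReal, H a ≤ ((βH k : NNReal) + 1)⁻¹ → a ≤ ((k : NNReal) + 1)⁻¹)
    (x : ℕ → X)
    (hufejer : ∀ r n m : ℕ, ∃ k : ℕ, ∀ p ∈ AF k, ∀ l ≤ m,
      H (nndist (x (n + l)) p) < G (nndist (x n) p) + ((r : NNReal) + 1)⁻¹)
    (happrox : ∀ k : ℕ, ∃ n : ℕ, x n ∈ AF k) :
    CauchySeq x := by
  -- approximate F-points
  choose f hf using happrox
  rw [Metric.cauchySeq_iff]
  intro ε hε
  -- pick k with 2/(k+1) < ε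
  obtain ⟨k, hk⟩ := exists_nat_gt (2 / ε)
  have hk' : 2 * (((k : ℝ) + 1))⁻¹ < ε := by
    have h1 : (0 : ℝ) < (k : ℝ) + 1 := by positivity
    rw [div_lt_iff₀ hε] at hk
    rw [mul_inv_lt_iff₀ h1]
    nlinarith [hk, hε]
  set B := βH k with hB
  set δ : NNReal := ((αG (2 * B + 1) : NNReal) + 1)⁻¹ with hδ
  have hδpos : (0 : ℝ) < (δ : ℝ) / 2 := by
    have : (0 : NNReal) < δ := by positivity
    have := (NNReal.coe_pos).mpr this
    linarith
  -- cover by finitely many balls of radius δ/2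
  obtain ⟨t, htfin, htcov⟩ := Metric.totallyBounded_iff.mp htb ((δ : ℝ) / 2) hδpos
  -- infinitely many approximate points in one ball
  have hpigeon : ∃ c ∈ t, {j : ℕ | x (f j) ∈ Metric.ball c ((δ : ℝ) / 2)}.Infinite := by
    by_contra hcon
    push_neg at hcon
    have hfin : (⋃ c ∈ t, {j : ℕ | x (f j) ∈ Metric.ball c ((δ : ℝ) / 2)}).Finite :=
      htfin.biUnion fun c hc => hcon c hc
    have : (Set.univ : Set ℕ) ⊆ ⋃ c ∈ t, {j : ℕ | x (f j) ∈ Metric.ball c ((δ : ℝ) / 2)} := by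
      intro j _
      have := htcov (Set.mem_univ (x (f j)))
      simpa using this
    exact Set.infinite_univ (Set.Finite.subset hfin this)
  obtain ⟨c, _, hJ⟩ := hpigeon
  obtain ⟨j₁, hj₁⟩ := hJ.nonempty
  set n := f j₁ with hn
  refine ⟨n, fun i hi j hj => ?_⟩
  -- key claim: every later point is within (k+1)⁻¹ of some common point at each horizon
  have key : ∀ m : ℕ, ∃ p : X, ∀ l ≤ m, (nndist (x (n + l)) p : NNReal) ≤ ((k : NNReal) + 1)⁻¹ := by
    intro m
    obtain ⟨k', hk'fej⟩ := hufejer (2 * B + 1) n m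
    obtain ⟨j₂, hj₂J, hj₂gt⟩ := hJ.exists_gt k'
    refine ⟨x (f j₂), fun l hl => ?_⟩
    have hpAF : x (f j₂) ∈ AF k' := hmono (le_of_lt hj₂gt) (hf j₂)
    have hdist : dist (x n) (x (f j₂)) < (δ : ℝ) := by
      have h1 : dist (x n) c < (δ : ℝ) / 2 := hj₁
      have h2 : dist (x (f j₂)) c < (δ : ℝ) / 2 := hj₂J
      calc dist (x n) (x (f j₂)) ≤ dist (x n) c + dist c (x (f j₂)) := dist_triangle _ _ _
        _ < (δ : ℝ) / 2 + (δ : ℝ) / 2 := by rw [dist_comm c]; linarith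
        _ = (δ : ℝ) := by ring
    have hnn : nndist (x n) (x (f j₂)) ≤ δ := by
      rw [← NNReal.coe_le_coe, coe_nndist]
      exact le_of_lt hdist
    have hG : G (nndist (x n) (x (f j₂))) ≤ (((2 * B + 1 : ℕ) : NNReal) + 1)⁻¹ :=
      hαG (2 * B + 1) _ hnn
    have hH := hk'fej (x (f j₂)) hpAF l hl
    have hHle : H (nndist (x (n + l)) (x (f j₂))) ≤ ((B : NNReal) + 1)⁻¹ := by
      have hcast : ((2 * B + 1 : ℕ) : NNReal) = 2 * (B : NNReal) + 1 := by push_cast; ring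
      calc H (nndist (x (n + l)) (x (f j₂)))
          ≤ G (nndist (x n) (x (f j₂))) + (((2 * B + 1 : ℕ) : NNReal) + 1)⁻¹ := le_of_lt hH
        _ ≤ (((2 * B + 1 : ℕ) : NNReal) + 1)⁻¹ + (((2 * B + 1 : ℕ) : NNReal) + 1)⁻¹ :=
            add_le_add_left hG _
        _ ≤ ((B : NNReal) + 1)⁻¹ := by rw [hcast]; exact stmt10_aux (B : NNReal)
    exact hβH k _ hHle
  -- apply claim with horizon max i j - n
  obtain ⟨p, hp⟩ := key (max i j - n)
  have hli : i - n ≤ max i j - n := Nat.sub_le_sub_right (le_max_left i j) n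
  have hlj : j - n ≤ max i j - n := Nat.sub_le_sub_right (le_max_right i j) n
  have hi' : n + (i - n) = i := Nat.add_sub_cancel' hi
  have hj' : n + (j - n) = j := Nat.add_sub_cancel' hj
  have h1 := hp (i - n) hli
  have h2 := hp (j - n) hlj
  rw [hi'] at h1
  rw [hj'] at h2
  have h1' : dist (x i) p ≤ (((k : NNReal) + 1)⁻¹ : NNReal) := by
    rw [← coe_nndist]; exact_mod_cast h1
  have h2' : dist (x j) p ≤ (((k : NNReal) + 1)⁻¹ : NNReal) := by
    rw [← coe_nndist]; exact_mod_cast h2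
  have hcoe : ((((k : NNReal) + 1)⁻¹ : NNReal) : ℝ) = ((k : ℝ) + 1)⁻¹ := by push_cast; ring
  rw [hcoe] at h1' h2'
  calc dist (x i) (x j) ≤ dist (x i) p + dist p (x j) := dist_triangle _ _ _
    _ ≤ ((k : ℝ) + 1)⁻¹ + ((k : ℝ) + 1)⁻¹ := by rw [dist_comm p]; linarith
    _ = 2 * ((k : ℝ) + 1)⁻¹ := by ring
    _ < ε := hk'
end

section
/- Let T : C → C be nonexpansive and (xₙ) its Picard iteration. Then (xₙ) is uniformly Fejér monotone with respect to Fix(T), represented by AF_k = {p ∈ C : d(p,Tp) ≤ 1/(k+1)}, with modulus χ(n,m,r) = m(r+1): for all r,n,m ∈ ℕ and all p ∈ C with d(p,Tp) ≤ 1/(m(r+1)+1), one has d(x_{n+l},p) < d(xₙ,p) + 1/(r+1) for all l ≤ m. -/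
theorem stmt13 {X : Type*} [MetricSpace X] (C : Set X) (T : X → X)
    (hT : ∀ x ∈ C, T x ∈ C)
    (hne : ∀ x ∈ C, ∀ y ∈ C, dist (T x) (T y) ≤ dist x y)
    (x0 : X) (hx0 : x0 ∈ C) (x : ℕ → X) (hx : x 0 = x0)
    (hxs : ∀ n, x (n + 1) = T (x n)) :
    ∀ r n m : ℕ, ∀ p ∈ C, dist p (T p) ≤ 1 / ((m * (r + 1) : ℕ) + 1) →
      ∀ l ≤ m, dist (x (n + l)) p < dist (x n) p + 1 / (r + 1) := by
  intro r n m p hp hdp l hl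
  have hxC : ∀ k, x k ∈ C := by
    intro k
    induction k with
    | zero => rw [hx]; exact hx0
    | succ k ih => rw [hxs]; exact hT _ ih
  have key : ∀ l : ℕ, dist (x (n + l)) p ≤ dist (x n) p + l * dist p (T p) := by
    intro l
    induction l with
    | zero => simp
    | succ l ih =>
      have : dist (x (n + (l + 1))) p ≤ dist (x (n + l)) p + dist p (T p) := by
        have h1 : x (n + (l + 1)) = T (x (n + l)) := hxs (n + l)
        calc dist (x (n + (l + 1))) p ≤ dist (x (n + (l + 1))) (T p) + dist (T p) p :=
              dist_triangle _ _ _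
          _ ≤ dist (x (n + l)) p + dist p (T p) := by
              rw [h1, dist_comm (T p) p]
              exact add_le_add_left (hne _ (hxC _) _ hp) _
      calc dist (x (n + (l + 1))) p ≤ dist (x (n + l)) p + dist p (T p) := this
        _ ≤ dist (x n) p + l * dist p (T p) + dist p (T p) := by linarith
        _ = dist (x n) p + (l + 1 : ℕ) * dist p (T p) := by push_cast; ring
  have hld : (l : ℝ) * dist p (T p) < 1 / (r + 1) := by
    have h1 : (l : ℝ) * dist p (T p) ≤ m * (1 / ((m * (r + 1) : ℕ) + 1)) := by
      apply mul_le_mul (by exact_mod_cast hl) hdp dist_nonneg (by positivity)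
    have h2 : (m : ℝ) * (1 / ((m * (r + 1) : ℕ) + 1)) < 1 / (r + 1) := by
      rw [mul_one_div, div_lt_div_iff₀ (by positivity) (by positivity)]
      push_cast
      nlinarith [Nat.cast_nonneg (α := ℝ) m, Nat.cast_nonneg (α := ℝ) r]
    linarith
  calc dist (x (n + l)) p ≤ dist (x n) p + l * dist p (T p) := key l
    _ < dist (x n) p + 1 / (r + 1) := by linarith
end

section
/- In a W-hyperbolic space, the Ishikawa iteration x₀ = x, x_{n+1} = (1−λₙ)xₙ ⊕ λₙT((1−sₙ)xₙ ⊕ sₙTxₙ) of a nonexpansive mapping T : C → C (with λₙ, sₙ ∈ [0,1]) satisfies d(x_{n+m}, p) ≤ d(xₙ, p) + 2m·d(p,Tp) for all n,m ∈ ℕ and p ∈ C. -/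
theorem stmt14 {X : Type*} [MetricSpace X] (W : X → X → ℝ → X)
    (W1 : ∀ x y z : X, ∀ l ∈ Set.Icc (0:ℝ) 1,
      dist z (W x y l) ≤ (1 - l) * dist z x + l * dist z y)
    (W2 : ∀ x y : X, ∀ l ∈ Set.Icc (0:ℝ) 1, ∀ l' ∈ Set.Icc (0:ℝ) 1,
      dist (W x y l) (W x y l') = |l - l'| * dist x y)
    (W3 : ∀ x y : X, ∀ l ∈ Set.Icc (0:ℝ) 1, W x y l = W y x (1 - l))
    (W4 : ∀ x y z w : X, ∀ l ∈ Set.Icc (0:ℝ) 1,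
      dist (W x z l) (W y w l) ≤ (1 - l) * dist x y + l * dist z w)
    (C : Set X)
    (hCconv : ∀ x ∈ C, ∀ y ∈ C, ∀ l ∈ Set.Icc (0:ℝ) 1, W x y l ∈ C)
    (T : X → X) (hT : ∀ x ∈ C, T x ∈ C)
    (hnonexp : ∀ x ∈ C, ∀ y ∈ C, dist (T x) (T y) ≤ dist x y)
    (lam s : ℕ → ℝ) (hlam : ∀ n, lam n ∈ Set.Icc (0:ℝ) 1)
    (hs : ∀ n, s n ∈ Set.Icc (0:ℝ) 1)
    (x0 : X) (hx0 : x0 ∈ C) (x : ℕ → X) (hx : x 0 = x0)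
    (hxs : ∀ n, x (n + 1) = W (x n) (T (W (x n) (T (x n)) (s n))) (lam n)) :
    ∀ n m : ℕ, ∀ p ∈ C, dist (x (n + m)) p ≤ dist (x n) p + 2 * m * dist p (T p) := by
  have hmem : ∀ n, x n ∈ C := by
    intro n
    induction n with
    | zero => rw [hx]; exact hx0
    | succ k ih =>
      rw [hxs]
      exact hCconv _ ih _ (hT _ (hCconv _ ih _ (hT _ ih) _ (hs k))) _ (hlam k)
  have key : ∀ k, ∀ p ∈ C, dist (x (k + 1)) p ≤ dist (x k) p + 2 * dist p (T p) := by
    intro k p hp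
    set y := W (x k) (T (x k)) (s k) with hy
    have hyC : y ∈ C := hCconv _ (hmem k) _ (hT _ (hmem k)) _ (hs k)
    have hs0 := (hs k).1
    have hs1 := (hs k).2
    have hl0 := (hlam k).1
    have hl1 := (hlam k).2
    have hdy : dist y p ≤ dist (x k) p + dist p (T p) := by
      have h1 : dist p y ≤ (1 - s k) * dist p (x k) + s k * dist p (T (x k)) :=
        W1 _ _ _ _ (hs k)
      have h2 : dist p (T (x k)) ≤ dist p (T p) + dist (x k) p := by
        calc dist p (T (x k)) ≤ dist p (T p) + dist (T p) (T (x k)) := dist_triangle _ _ _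
          _ ≤ dist p (T p) + dist p (x k) := by
              have := hnonexp _ hp _ (hmem k); linarith
          _ = dist p (T p) + dist (x k) p := by rw [dist_comm p (x k)]
      rw [dist_comm y p]
      calc dist p y ≤ (1 - s k) * dist p (x k) + s k * dist p (T (x k)) := h1
        _ ≤ (1 - s k) * dist p (x k) + s k * (dist p (T p) + dist (x k) p) := by
            have := mul_le_mul_of_nonneg_left h2 hs0; linarith
        _ = dist (x k) p + s k * dist p (T p) := by rw [dist_comm p (x k)]; ring
        _ ≤ dist (x k) p + dist p (T p) := by
            nlinarith [dist_nonneg (x := p) (y := T p)]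
    have hTy : dist (T y) p ≤ dist (x k) p + 2 * dist p (T p) := by
      calc dist (T y) p ≤ dist (T y) (T p) + dist (T p) p := dist_triangle _ _ _
        _ ≤ dist y p + dist p (T p) := by
            have := hnonexp _ hyC _ hp; rw [dist_comm (T p) p]; linarith
        _ ≤ dist (x k) p + 2 * dist p (T p) := by linarith
    have h3 : dist p (x (k+1)) ≤ (1 - lam k) * dist p (x k) + lam k * dist p (T y) := by
      rw [hxs k]; exact W1 _ _ _ _ (hlam k)
    rw [dist_comm (x (k+1)) p]
    calc dist p (x (k+1)) ≤ (1 - lam k) * dist p (x k) + lam k * dist p (T y) := h3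
      _ ≤ (1 - lam k) * dist p (x k) + lam k * (dist (x k) p + 2 * dist p (T p)) := by
          rw [dist_comm p (T y)] at *
          have := mul_le_mul_of_nonneg_left hTy hl0; linarith
      _ ≤ dist (x k) p + 2 * dist p (T p) := by
          rw [dist_comm p (x k)]
          nlinarith [dist_nonneg (x := p) (y := T p)]
  intro n m p hp
  induction m with
  | zero => simp
  | succ m ih =>
    have := key (n + m) p hp
    have : dist (x (n + (m+1))) p ≤ dist (x n) p + 2 * m * dist p (T p) + 2 * dist p (T p) := by
      rw [show n + (m+1) = (n + m) + 1 by ring]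
      linarith
    push_cast
    push_cast at ih
    linarith
end

section
/- Let T : C → C satisfy condition (E_μ) for some μ ≥ 1 on a convex subset C of a W-hyperbolic space, and let (xₙ) be the Mann iteration x_{n+1} = (1−λₙ)xₙ ⊕ λₙTxₙ with λₙ ∈ [1/L, 1−1/L] for some L ≥ 2. Then for all n,m ∈ ℕ and p ∈ C: d(x_{n+m}, p) ≤ d(xₙ, p) + μ·m·(1 − 1/L)·d(p, Tp). -/
theorem stmt15 {X : Type*} [MetricSpace X] (W : X → X → ℝ → X)
    (W1 : ∀ x y z : X, ∀ l ∈ Set.Icc (0:ℝ) 1,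
      dist z (W x y l) ≤ (1 - l) * dist z x + l * dist z y)
    (W2 : ∀ x y : X, ∀ l ∈ Set.Icc (0:ℝ) 1, ∀ l' ∈ Set.Icc (0:ℝ) 1,
      dist (W x y l) (W x y l') = |l - l'| * dist x y)
    (W3 : ∀ x y : X, ∀ l ∈ Set.Icc (0:ℝ) 1, W x y l = W y x (1 - l))
    (W4 : ∀ x y z w : X, ∀ l ∈ Set.Icc (0:ℝ) 1,
      dist (W x z l) (W y w l) ≤ (1 - l) * dist x y + l * dist z w)
    (C : Set X)
    (hCconv : ∀ x ∈ C, ∀ y ∈ C, ∀ l ∈ Set.Icc (0:ℝ) 1, W x y l ∈ C)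
    (T : X → X) (hT : ∀ x ∈ C, T x ∈ C)
    (μ : ℝ) (hμ : 1 ≤ μ)
    (hE : ∀ x ∈ C, ∀ y ∈ C, dist x (T y) ≤ μ * dist (T x) x + dist x y)
    (L : ℝ) (hL : 2 ≤ L)
    (lam : ℕ → ℝ) (hlam : ∀ n, lam n ∈ Set.Icc (1 / L) (1 - 1 / L))
    (x0 : X) (hx0 : x0 ∈ C) (x : ℕ → X) (hx : x 0 = x0)
    (hxs : ∀ n, x (n + 1) = W (x n) (T (x n)) (lam n)) :
    ∀ n m : ℕ, ∀ p ∈ C,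
      dist (x (n + m)) p ≤ dist (x n) p + μ * m * (1 - 1 / L) * dist p (T p) := by
  have hL0 : (0:ℝ) < L := by linarith
  have hlam01 : ∀ n, lam n ∈ Set.Icc (0:ℝ) 1 := by
    intro n
    obtain ⟨h1, h2⟩ := hlam n
    have h1L : 0 < 1 / L := by positivity
    constructor <;> nlinarith
  have hxC : ∀ n, x n ∈ C := by
    intro n
    induction n with
    | zero => rw [hx]; exact hx0
    | succ k ih =>
      rw [hxs k]
      exact hCconv _ ih _ (hT _ ih) _ (hlam01 k)
  intro n m p hp
  induction m with
  | zero => simp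
  | succ k ih =>
    have key : dist (x (n + k + 1)) p ≤ dist (x (n + k)) p + μ * (1 - 1 / L) * dist p (T p) := by
      rw [hxs (n + k)]
      have h1 : dist p (W (x (n+k)) (T (x (n+k))) (lam (n+k))) ≤
          (1 - lam (n+k)) * dist p (x (n+k)) + lam (n+k) * dist p (T (x (n+k))) :=
        W1 _ _ _ _ (hlam01 _)
      have h2 : dist p (T (x (n+k))) ≤ μ * dist (T p) p + dist p (x (n+k)) :=
        hE p hp _ (hxC _)
      have hlnn : 0 ≤ lam (n + k) := (hlam01 _).1
      have hlub : lam (n + k) ≤ 1 - 1 / L := (hlam (n + k)).2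
      have hd : 0 ≤ dist (T p) p := dist_nonneg
      have hμ0 : 0 ≤ μ := by linarith
      rw [dist_comm (W _ _ _) p, dist_comm p (T p)]
      calc dist p (W (x (n+k)) (T (x (n+k))) (lam (n+k)))
          ≤ (1 - lam (n+k)) * dist p (x (n+k)) + lam (n+k) * dist p (T (x (n+k))) := h1
        _ ≤ (1 - lam (n+k)) * dist p (x (n+k)) +
            lam (n+k) * (μ * dist (T p) p + dist p (x (n+k))) := by nlinarith
        _ = dist p (x (n+k)) + lam (n+k) * μ * dist (T p) p := by ring
        _ ≤ dist (x (n+k)) p + μ * (1 - 1 / L) * dist (T p) p := by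
            rw [dist_comm p (x (n+k))]
            have h3 : lam (n+k) * μ * dist (T p) p ≤ μ * (1 - 1/L) * dist (T p) p := by
              rw [mul_comm (lam (n+k)) μ]
              exact mul_le_mul_of_nonneg_right (mul_le_mul_of_nonneg_left hlub hμ0) hd
            linarith
    have : (((k : ℕ) + 1 : ℕ) : ℝ) = (k : ℝ) + 1 := by push_cast; ring
    have goal : dist (x (n + (k+1))) p ≤ dist (x n) p + μ * ((k:ℝ)+1) * (1 - 1/L) * dist p (T p) := by
      have : n + (k + 1) = n + k + 1 := by ring
      rw [this]
      calc dist (x (n + k + 1)) p ≤ dist (x (n + k)) p + μ * (1 - 1 / L) * dist p (T p) := key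
        _ ≤ dist (x n) p + μ * k * (1 - 1/L) * dist p (T p) + μ * (1 - 1 / L) * dist p (T p) := by
            linarith
        _ = dist (x n) p + μ * ((k:ℝ)+1) * (1 - 1/L) * dist p (T p) := by ring
    simpa using goal
end

section
/- Let T : C → C satisfy condition (E_μ) with μ ≥ 1 on a subset C of a metric space. Then Fix(T), represented by AF_k = {x ∈ C : d(x,Tx) ≤ 1/(k+1)}, is uniformly closed with moduli δ_F(k) = 2μ(k+1)−1 and ω_F(k) = 4k+3: for all k ∈ ℕ and p,q ∈ C, if d(q,Tq) ≤ 1/(2μ(k+1)) and d(p,q) ≤ 1/(4(k+1)), then d(p,Tp) ≤ 1/(k+1). -/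
theorem stmt16 {X : Type*} [MetricSpace X] (C : Set X) (T : X → X)
    (hT : ∀ x ∈ C, T x ∈ C) (μ : ℝ) (hμ : 1 ≤ μ)
    (hE : ∀ x ∈ C, ∀ y ∈ C, dist x (T y) ≤ μ * dist (T x) x + dist x y) :
    ∀ k : ℕ, ∀ p ∈ C, ∀ q ∈ C,
      dist q (T q) ≤ 1 / (2 * μ * (k + 1)) → dist p q ≤ 1 / (4 * (k + 1)) →
      dist p (T p) ≤ 1 / (k + 1) := by
  intro k p hp q hq h1 h2
  have hk : (0:ℝ) < k + 1 := by positivity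
  have hμ0 : (0:ℝ) < μ := lt_of_lt_of_le one_pos hμ
  have hE' := hE q hq p hp
  have tri : dist p (T p) ≤ dist p q + dist q (T p) := dist_triangle _ _ _
  have h3 : dist q (T p) ≤ μ * dist (T q) q + dist q p := hE'
  rw [dist_comm (T q) q, dist_comm q p] at h3
  have hmul : μ * dist q (T q) ≤ μ * (1 / (2 * μ * (k + 1))) :=
    mul_le_mul_of_nonneg_left h1 hμ0.le
  have hsimp : μ * (1 / (2 * μ * (k + 1))) = 1 / (2 * (k + 1)) := by
    field_simp
  calc dist p (T p) ≤ dist p q + (μ * dist q (T q) + dist p q) := by linarith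
    _ ≤ 1 / (4 * (k + 1)) + (1 / (2 * (k + 1)) + 1 / (4 * (k + 1))) := by
        rw [hsimp] at hmul; linarith
    _ = 1 / (k + 1) := by field_simp; ring
end

section
/- Suppose (xₙ) is a sequence in a Hilbert space, p is a point, and ‖x_{n+1} − p‖² ≤ ‖xₙ − p‖² − ‖xₙ − x_{n+1}‖² for all n, with ‖x₀ − p‖ ≤ b for some b > 0. Then liminf ‖xₙ − x_{n+1}‖ = 0 with modulus Δ(k,L,b) := ⌈b²(k+1)²⌉ + L − 1: for every k, L ∈ ℕ there exists N with L ≤ N ≤ Δ(k,L,b) and ‖x_N − x_{N+1}‖ ≤ 1/(k+1). -/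
theorem stmt19 {H : Type*} [NormedAddCommGroup H] [InnerProductSpace ℝ H]
    (x : ℕ → H) (p : H) (b : ℝ) (hb : 0 < b) (hx0 : ‖x 0 - p‖ ≤ b)
    (hstep : ∀ n : ℕ, ‖x (n + 1) - p‖ ^ 2 ≤ ‖x n - p‖ ^ 2 - ‖x n - x (n + 1)‖ ^ 2) :
    ∀ k L : ℕ, ∃ N : ℕ, L ≤ N ∧ N ≤ ⌈b ^ 2 * (k + 1) ^ 2⌉₊ + L - 1 ∧
      ‖x N - x (N + 1)‖ ≤ 1 / (k + 1) := by
  intro k L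
  set M : ℕ := ⌈b ^ 2 * (k + 1) ^ 2⌉₊ with hM
  have hk1 : (0:ℝ) < (k:ℝ) + 1 := by positivity
  have hMpos : 1 ≤ M := by
    rw [hM, Nat.one_le_ceil_iff]
    positivity
  -- telescoping sum bound
  have htel : ∀ a m : ℕ, ∑ i ∈ Finset.Ico a (a + m), ‖x i - x (i+1)‖^2
      ≤ ‖x a - p‖^2 - ‖x (a + m) - p‖^2 := by
    intro a m
    induction m with
    | zero => simp
    | succ m ih =>
      rw [← Nat.add_assoc, Finset.sum_Ico_succ_top (Nat.le_add_right a m)]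
      have := hstep (a + m)
      linarith
  -- monotonicity: ‖x n - p‖² ≤ b²
  have hbd : ∀ n : ℕ, ‖x n - p‖^2 ≤ b^2 := by
    intro n
    induction n with
    | zero =>
      have := norm_nonneg (x 0 - p)
      nlinarith
    | succ n ih =>
      have := hstep n
      have := sq_nonneg ‖x n - x (n+1)‖
      linarith
  by_contra hcon
  push_neg at hcon
  have hstrict : ∀ i ∈ Finset.Ico L (L + M), (1/((k:ℝ)+1))^2 < ‖x i - x (i+1)‖^2 := by
    intro i hi
    rw [Finset.mem_Ico] at hi
    have h1 : 1 / ((k:ℝ)+1) < ‖x i - x (i+1)‖ := by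
      have := hcon i hi.1 (by omega)
      push_cast at this ⊢
      exact this
    have h0 : (0:ℝ) ≤ 1/((k:ℝ)+1) := by positivity
    nlinarith
  have hsum : (M:ℝ) * (1/((k:ℝ)+1))^2 < ∑ i ∈ Finset.Ico L (L + M), ‖x i - x (i+1)‖^2 := by
    have hne : (Finset.Ico L (L + M)).Nonempty := by
      rw [Finset.nonempty_Ico]; omega
    calc (M:ℝ) * (1/((k:ℝ)+1))^2
        = ∑ _i ∈ Finset.Ico L (L + M), (1/((k:ℝ)+1))^2 := by
          rw [Finset.sum_const, Nat.card_Ico, Nat.add_sub_cancel_left]; push_cast; ring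
      _ < _ := Finset.sum_lt_sum_of_nonempty hne hstrict
  have hMge : b^2 * ((k:ℝ)+1)^2 ≤ M := by
    have := Nat.le_ceil (b ^ 2 * ((k:ℝ) + 1) ^ 2)
    push_cast at this ⊢
    convert this using 3 <;> push_cast <;> ring_nf
  have hup : ∑ i ∈ Finset.Ico L (L + M), ‖x i - x (i+1)‖^2 ≤ b^2 := by
    have h1 := htel L M
    have h2 := hbd L
    have h3 := sq_nonneg ‖x (L + M) - p‖
    linarith
  have : b^2 ≤ (M:ℝ) * (1/((k:ℝ)+1))^2 := by
    rw [div_pow, one_pow, mul_one_div, le_div_iff₀ (by positivity)]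
    linarith
  linarith
end
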